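/- Let m ≥ 1, let d be an integer with 1 ≤ d ≤ q^m, and let s be an integer with 0 ≤ s ≤ m(q-1). Then RM_q(s,m) ⊆ Hyp_q(d,m) if and only if s ≤ (m-c)(q-1) + q - ⌈d/q^{c-1}⌉, where c = ⌈log_q(d)⌉. -/

import Mathlib

open MvPolynomial Finset Pointwise

noncomputable section

/-- Evaluation of a multivariate polynomial at all points of `F^m`. -/
def evalPt {F : Type} [Field F] {m : ℕ} (f : MvPolynomial (Fin m) F) : (Fin m → F) → F :=
  fun P => MvPolynomial.eval P f

/-- The monomial code `C_A = ev(F_q[A])`, the evaluations of the polynomials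
whose monomial support is contained in `A`. -/
def monomialCode (F : Type) [Field F] (m : ℕ) (A : Set (Fin m →₀ ℕ)) :
    Set ((Fin m → F) → F) :=
  { v | ∃ f : MvPolynomial (Fin m) F, (↑f.support : Set (Fin m →₀ ℕ)) ⊆ A ∧ v = evalPt f }

/-- Exponent set of the Reed–Muller code `RM_q(s,m)` (empty when `s < 0`). -/
def RMset (q m : ℕ) (s : ℤ) : Set (Fin m →₀ ℕ) :=
  { i | (∀ j, i j < q) ∧ (∑ j, (i j : ℤ)) ≤ s }

/-- Exponent set of the hyperbolic code `Hyp_q(d,m)`. -/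
def Hypset (q m d : ℕ) : Set (Fin m →₀ ℕ) :=
  { i | (∀ j, i j < q) ∧ d ≤ ∏ j, (q - i j) }

/-- Exponent set of the cube code `Cube_q(s,m)`. -/
def Cubeset (m s : ℕ) : Set (Fin m →₀ ℕ) :=
  { i | ∀ j, i j ≤ s }

/-- Minimum distance of a code: least Hamming weight of a nonzero codeword. -/
def minDist {F : Type} [Field F] [Fintype F] [DecidableEq F] {m : ℕ}
    (C : Set ((Fin m → F) → F)) : ℕ :=
  sInf { w | ∃ v ∈ C, v ≠ 0 ∧ hammingNorm v = w }

/-- Hamming distance from a word to a code. -/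
def distToCode {F : Type} [Field F] [Fintype F] [DecidableEq F] {m : ℕ}
    (y : (Fin m → F) → F) (C : Set ((Fin m → F) → F)) : ℕ :=
  sInf { w | ∃ c ∈ C, hammingDist y c = w }

/-- `i`-fold Minkowski sum of `H` with itself (`0`-fold sum is `{0}`). -/
def iMink {m : ℕ} (H : Set (Fin m →₀ ℕ)) : ℕ → Set (Fin m →₀ ℕ)
  | 0 => {0}
  | i + 1 => iMink H i + H

/-- The sets `L(d,r,i)` from the Geil–Matsumoto list-decoding algorithm. -/
def Lset (q m d r i : ℕ) : Set (Fin m →₀ ℕ) :=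
  { a | (∀ j, a j < q) ∧ ∀ x ∈ iMink (Hypset q m d) i, a + x ∈ Hypset q m (r + 1) }

/-- Min-product lower bound: if each `a j ∈ [1,q]` and the total "excess" `∑ (a j - 1)`
is at least `k(q-1)+r`, then `∏ a j ≥ q^k (1+r)`. -/
lemma prodG (q : ℕ) (hq : 2 ≤ q) :
    ∀ (m : ℕ) (a : Fin m → ℕ), (∀ j, 1 ≤ a j) → (∀ j, a j ≤ q) →
      ∀ k r : ℕ, r ≤ q - 1 → k * (q - 1) + r ≤ ∑ j, (a j - 1) →
      q ^ k * (1 + r) ≤ ∏ j, a j := by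
  intro m
  induction m with
  | zero =>
    intro a _ _ k r hr hsum
    simp only [Finset.univ_eq_empty, Finset.sum_empty, Nat.le_zero, Finset.prod_empty] at hsum ⊢
    have hk : k * (q - 1) = 0 ∧ r = 0 := by omega
    rcases Nat.mul_eq_zero.mp hk.1 with h | h
    · simp [h, hk.2]
    · omega
  | succ m ih =>
    intro a h1 h2 k r hr hsum
    rw [Fin.sum_univ_castSucc] at hsum
    rw [Fin.prod_univ_castSucc]
    have hb1 : 1 ≤ a (Fin.last m) := h1 _
    have hbq : a (Fin.last m) ≤ q := h2 _
    set b := a (Fin.last m) - 1 with hbdef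
    have hab : a (Fin.last m) = b + 1 := by omega
    have hbq' : b ≤ q - 1 := by omega
    by_cases hbr : b ≤ r
    · obtain ⟨u, hu⟩ : ∃ u, r = u + b := ⟨r - b, by omega⟩
      have hsum2 : k * (q - 1) + u ≤ ∑ j : Fin m, (a j.castSucc - 1) := by omega
      have hIH := ih (fun j => a j.castSucc) (fun j => h1 _) (fun j => h2 _) k u
        (by omega) (by simpa using hsum2)
      have hkey : 1 + r ≤ (1 + u) * (b + 1) := by nlinarith
      calc q ^ k * (1 + r) ≤ q ^ k * ((1 + u) * (b + 1)) := Nat.mul_le_mul_left _ hkey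
        _ = (q ^ k * (1 + u)) * (b + 1) := by ring
        _ ≤ (∏ j : Fin m, a j.castSucc) * a (Fin.last m) := by
            rw [hab]; exact Nat.mul_le_mul hIH le_rfl
    · rcases Nat.eq_zero_or_pos k with hk0 | hk0
      · subst hk0
        have hprod : 1 ≤ ∏ j : Fin m, a j.castSucc :=
          Nat.one_le_iff_ne_zero.mpr (Finset.prod_ne_zero_iff.mpr fun j _ => by
            have := h1 j.castSucc; omega)
        calc q ^ 0 * (1 + r) = 1 + r := by ring
          _ ≤ 1 * a (Fin.last m) := by omega
          _ ≤ (∏ j : Fin m, a j.castSucc) * a (Fin.last m) := Nat.mul_le_mul hprod le_rfl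
      · obtain ⟨k', rfl⟩ : ∃ k', k = k' + 1 := ⟨k - 1, by omega⟩
        obtain ⟨y, hy⟩ : ∃ y, b = r + y + 1 := ⟨b - r - 1, by omega⟩
        obtain ⟨x, hx⟩ : ∃ x, q - 1 = b + x := ⟨q - 1 - b, by omega⟩
        have hr' : q - 1 - (b - r) = r + x := by omega
        have hsum' : k' * (q - 1) + (q - 1 - (b - r)) ≤ ∑ j : Fin m, (a j.castSucc - 1) := by
          have hmul : (k' + 1) * (q - 1) = k' * (q - 1) + (q - 1) := by ring
          rw [hmul] at hsum
          set K := k' * (q - 1)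
          set S := ∑ j : Fin m, (a j.castSucc - 1)
          omega
        have hIH := ih (fun j => a j.castSucc) (fun j => h1 _) (fun j => h2 _) k'
          (q - 1 - (b - r)) (by omega) (by simpa using hsum')
        have hq' : q = r + y + x + 2 := by omega
        calc q ^ (k' + 1) * (1 + r) = q ^ k' * (q * (1 + r)) := by ring
          _ ≤ q ^ k' * ((1 + (q - 1 - (b - r))) * (b + 1)) := by
              apply Nat.mul_le_mul_left
              rw [hr', hy, hq']; nlinarith
          _ = (q ^ k' * (1 + (q - 1 - (b - r)))) * (b + 1) := by ring
          _ ≤ (∏ j : Fin m, a j.castSucc) * a (Fin.last m) := by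
              rw [hab]; exact Nat.mul_le_mul hIH le_rfl

/-- Existence of an extremal exponent vector realizing the minimal hyperbolic product. -/
lemma witnessW (q : ℕ) (hq : 2 ≤ q) :
    ∀ (m e : ℕ), e ≤ m * (q - 1) →
      ∃ g : Fin m → ℕ, (∀ j, g j < q) ∧ (∑ j, g j) + e = m * (q - 1) ∧
        ∏ j, (q - g j) = q ^ (e / (q - 1)) * (1 + e % (q - 1)) := by
  intro m
  induction m with
  | zero =>
    intro e he
    simp only [Nat.zero_mul, Nat.le_zero] at he
    subst he
    exact ⟨fun j => 0, by simp, by simp, by simp⟩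
  | succ m ih =>
    intro e he
    have hm1 : (m + 1) * (q - 1) = m * (q - 1) + (q - 1) := by ring
    by_cases hcase : q - 1 ≤ e
    · obtain ⟨e', rfl⟩ : ∃ e', e = e' + (q - 1) := ⟨e - (q - 1), by omega⟩
      obtain ⟨g, hg1, hg2, hg3⟩ := ih e' (by omega)
      refine ⟨Fin.snoc g 0, ?_, ?_, ?_⟩
      · intro j
        refine Fin.lastCases ?_ (fun j => ?_) j
        · simp; omega
        · simpa using hg1 j
      · rw [Fin.sum_univ_castSucc]
        simp only [Fin.snoc_castSucc, Fin.snoc_last]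
        omega
      · rw [Fin.prod_univ_castSucc]
        simp only [Fin.snoc_castSucc, Fin.snoc_last, Nat.sub_zero]
        rw [hg3, Nat.add_div_right _ (by omega : 0 < q - 1), Nat.add_mod_right]
        ring
    · obtain ⟨g, hg1, hg2, hg3⟩ := ih 0 (by omega)
      refine ⟨Fin.snoc g (q - 1 - e), ?_, ?_, ?_⟩
      · intro j
        refine Fin.lastCases ?_ (fun j => ?_) j
        · simp; omega
        · simpa using hg1 j
      · rw [Fin.sum_univ_castSucc]
        simp only [Fin.snoc_castSucc, Fin.snoc_last]
        omega
      · rw [Fin.prod_univ_castSucc]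
        simp only [Fin.snoc_castSucc, Fin.snoc_last]
        have hlt : e < q - 1 := by omega
        have hq1 : q - (q - 1 - e) = 1 + e := by omega
        rw [hg3, hq1, Nat.div_eq_of_lt hlt, Nat.mod_eq_of_lt hlt]
        simp

lemma code_mono {F : Type} [Field F] {m : ℕ} {A B : Set (Fin m →₀ ℕ)} (h : A ⊆ B) :
    monomialCode F m A ⊆ monomialCode F m B := by
  rintro v ⟨f, hf, hv⟩
  exact ⟨f, hf.trans h, hv⟩

lemma set_le_of_code_le (F : Type) [Field F] [Fintype F] [DecidableEq F] {q m : ℕ}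
    (hq : Fintype.card F = q) {A B : Set (Fin m →₀ ℕ)}
    (hB : ∀ i ∈ B, ∀ j, i j < q)
    (h : monomialCode F m A ⊆ monomialCode F m B) : ∀ i ∈ A, (∀ j, i j < q) → i ∈ B := by
  intro i hiA hiq
  have hmem : evalPt (MvPolynomial.monomial i (1 : F)) ∈ monomialCode F m A := by
    refine ⟨MvPolynomial.monomial i (1 : F), ?_, rfl⟩
    rw [MvPolynomial.support_monomial, if_neg (one_ne_zero)]
    simpa using hiA
  obtain ⟨g, hg, hev⟩ := h hmem
  have hzero : MvPolynomial.monomial i (1 : F) - g = 0 := by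
    apply MvPolynomial.eq_zero_of_eval_eq_zero
    · intro v
      have := congrFun hev v
      simp only [evalPt] at this
      rw [map_sub, this, sub_self]
    · rw [MvPolynomial.mem_restrictDegree]
      intro s hs j
      have hs' := MvPolynomial.support_sub (Fin m) (MvPolynomial.monomial i (1 : F)) g hs
      rw [Finset.mem_union] at hs'
      rw [hq]
      rcases hs' with hs' | hs'
      · rw [MvPolynomial.support_monomial, if_neg one_ne_zero, Finset.mem_singleton] at hs'
        subst hs'
        have := hiq j; omega
      · have := hB s (hg hs') j; omega
  have heq : MvPolynomial.monomial i (1 : F) = g := by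
    rwa [sub_eq_zero] at hzero
  apply hg
  rw [← heq, MvPolynomial.support_monomial, if_neg one_ne_zero]
  simp

lemma ceil_facts (q d m : ℕ) (hq : 2 ≤ q) (hd : 2 ≤ d) (hdm : d ≤ q ^ m)
    (c : ℤ) (hc : c = ⌈Real.logb q d⌉) :
    ∃ cn : ℕ, (cn : ℤ) = c ∧ 1 ≤ cn ∧ cn ≤ m ∧ q ^ (cn - 1) < d ∧ d ≤ q ^ cn := by
  have hb : (1 : ℝ) < q := by exact_mod_cast hq
  have hd0 : (0 : ℝ) < d := by positivity
  have hlog : 0 < Real.logb q d := Real.logb_pos hb (by exact_mod_cast hd)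
  have hc0 : 0 < c := by rw [hc]; exact Int.ceil_pos.mpr hlog
  have h1 : Real.logb q d ≤ (c : ℝ) := by rw [hc]; exact Int.le_ceil _
  rw [Real.logb_le_iff_le_rpow hb hd0] at h1
  have h2 : ((c : ℝ) - 1) < Real.logb q d := by
    have h := Int.ceil_lt_add_one (Real.logb q d)
    rw [← hc] at h
    push_cast at h ⊢
    linarith
  rw [Real.lt_logb_iff_rpow_lt hb hd0] at h2
  have hcm : c ≤ (m : ℤ) := by
    rw [hc]
    apply Int.ceil_le.mpr
    rw [Real.logb_le_iff_le_rpow hb hd0]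
    push_cast
    rw [Real.rpow_natCast]
    exact_mod_cast hdm
  obtain ⟨cc, hcc⟩ : ∃ cc : ℕ, c = (cc : ℤ) + 1 := ⟨(c - 1).toNat, by omega⟩
  subst hcc
  refine ⟨cc + 1, by push_cast; ring, by omega, by exact_mod_cast hcm, ?_, ?_⟩
  · have e2 : ((cc : ℕ) : ℝ) = (((cc : ℤ) + 1 : ℤ) : ℝ) - 1 := by push_cast; ring
    have h2' : (q : ℝ) ^ ((cc : ℕ) : ℝ) < d := by rw [e2]; exact h2
    rw [Real.rpow_natCast] at h2'
    have : (q : ℕ) ^ cc < d := by exact_mod_cast h2'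
    simpa using this
  · have e1 : (((cc + 1 : ℕ)) : ℝ) = (((cc : ℤ) + 1 : ℤ) : ℝ) := by push_cast; ring
    have h1' : (d : ℝ) ≤ (q : ℝ) ^ ((cc + 1 : ℕ) : ℝ) := by rw [e1]; exact h1
    rw [Real.rpow_natCast] at h1'
    exact_mod_cast h1'

lemma ceil_div_eq (d Q n : ℕ) (hQ : 1 ≤ Q) (hd : 1 ≤ d)
    (h1 : Q * n ≤ d - 1) (h2 : d - 1 < Q * n + Q) :
    ⌈(d : ℝ) / (Q : ℝ)⌉ = ((n + 1 : ℕ) : ℤ) := by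
  have hQ0 : (0 : ℝ) < Q := by positivity
  rw [Int.ceil_eq_iff]
  constructor
  · have e : ((((n + 1 : ℕ)) : ℤ) : ℝ) - 1 = (n : ℝ) := by push_cast; ring
    rw [e, lt_div_iff₀ hQ0]
    have h3 : n * Q < d := by
      have : n * Q = Q * n := mul_comm _ _
      omega
    exact_mod_cast h3
  · rw [div_le_iff₀ hQ0]
    have h4 : d ≤ (n + 1) * Q := by
      have : (n + 1) * Q = Q * n + Q := by ring
      omega
    exact_mod_cast h4

/-- `RM_q(s,m) ⊆ Hyp_q(d,m)` iff `s ≤ (m-c)(q-1) + q - ⌈d/q^{c-1}⌉`,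
where `c = ⌈log_q d⌉`. -/
theorem statement8 (F : Type) [Field F] [Fintype F] [DecidableEq F]
    (q m d s : ℕ) (hq : Fintype.card F = q) (hm : 1 ≤ m) (hd1 : 1 ≤ d) (hd2 : d ≤ q ^ m)
    (hs : s ≤ m * (q - 1)) (c : ℤ) (hc : c = ⌈Real.logb q d⌉) :
    monomialCode F m (RMset q m (s : ℤ)) ⊆ monomialCode F m (Hypset q m d) ↔
      (s : ℤ) ≤ ((m : ℤ) - c) * ((q : ℤ) - 1) + (q : ℤ) - ⌈(d : ℝ) / (q : ℝ) ^ (c - 1)⌉ := by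
  have hq2 : 2 ≤ q := by rw [← hq]; exact Fintype.one_lt_card
  rcases eq_or_lt_of_le hd1 with hd | hd2'
  · -- d = 1 : both sides always hold
    subst hd
    have hc0 : c = 0 := by
      rw [hc]
      norm_num [Real.logb_one]
    have hceil : ⌈((1 : ℕ) : ℝ) / (q : ℝ) ^ (c - 1)⌉ = (q : ℤ) := by
      rw [hc0]
      norm_num [zpow_neg, Int.ceil_natCast]
    constructor
    · intro _
      rw [hceil, hc0]
      have hcast : ((m * (q - 1) : ℕ) : ℤ) = (m : ℤ) * ((q : ℤ) - 1) := by
        push_cast [Nat.cast_sub (show 1 ≤ q by omega)]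
        ring
      have h' : (s : ℤ) ≤ ((m * (q - 1) : ℕ) : ℤ) := Nat.cast_le.mpr hs
      rw [hcast] at h'
      linarith
    · intro _
      apply code_mono
      rintro i ⟨hi1, hi2⟩
      refine ⟨hi1, ?_⟩
      exact Nat.one_le_iff_ne_zero.mpr (Finset.prod_ne_zero_iff.mpr fun j _ => by
        have := hi1 j; omega)
  · -- d ≥ 2
    obtain ⟨cn, hcnc, hcn1, hcnm, hQd0, hdQ0⟩ := ceil_facts q d m hq2 hd2' hd2 c hc
    obtain ⟨Q, hQdef⟩ : ∃ Q, Q = q ^ (cn - 1) := ⟨_, rfl⟩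
    have hQd : Q < d := hQdef ▸ hQd0
    have hQ1 : 1 ≤ Q := hQdef ▸ Nat.one_le_pow _ _ (by omega)
    have hqcn : Q * q = q ^ cn := by
      rw [hQdef, ← pow_succ]
      congr 1
      omega
    obtain ⟨E, hE1, hE2⟩ : ∃ E, Q * E ≤ d - 1 ∧ d - 1 < Q * E + Q := by
      refine ⟨(d - 1) / Q, Nat.mul_div_le _ _, ?_⟩
      have h := Nat.div_add_mod (d - 1) Q
      have hm := Nat.mod_lt (d - 1) (show 0 < Q by omega)
      omega
    obtain ⟨D, hDdef⟩ : ∃ D, D = E + 1 := ⟨_, rfl⟩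
    have hceil : ⌈(d : ℝ) / (q : ℝ) ^ (c - 1)⌉ = (D : ℤ) := by
      have hzc : (q : ℝ) ^ (c - 1) = (Q : ℝ) := by
        rw [← hcnc, show ((cn : ℤ) - 1) = ((cn - 1 : ℕ) : ℤ) by omega, zpow_natCast, hQdef]
        push_cast
        ring
      rw [hzc, hDdef]
      exact ceil_div_eq d Q E hQ1 hd1 hE1 hE2
    have hQD1 : Q * (D - 1) < d := by
      have h2 : Q * (D - 1) = Q * E := by rw [hDdef, Nat.add_sub_cancel]
      omega
    have hQD2 : d ≤ Q * D := by
      have h4 : Q * D = Q * E + Q := by rw [hDdef]; ring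
      omega
    have hD2 : 2 ≤ D := by
      by_contra h
      have hE0 : E = 0 := by omega
      rw [hE0, Nat.mul_zero] at hE2
      omega
    have hDq : D ≤ q := by
      by_contra h
      have hqE : q ≤ E := by omega
      have h5 : Q * q ≤ Q * E := Nat.mul_le_mul_left _ hqE
      have h6 : d ≤ q ^ cn := hdQ0
      omega
    rw [hceil, ← hcnc]
    obtain ⟨P, hP⟩ : ∃ P, P = m * (q - 1) := ⟨_, rfl⟩
    obtain ⟨U, hU⟩ : ∃ U, U = (cn - 1) * (q - 1) := ⟨_, rfl⟩
    have hsP : s ≤ P := hP ▸ hs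
    have hUcn : U + (q - 1) = cn * (q - 1) := by
      rw [hU]
      have h5 : cn - 1 + 1 = cn := by omega
      calc (cn - 1) * (q - 1) + (q - 1) = (cn - 1 + 1) * (q - 1) := by ring
        _ = cn * (q - 1) := by rw [h5]
    have e1 : (((cn - 1) * (q - 1) + (D - 1) + s : ℕ) : ℤ) =
        ((cn : ℤ) - 1) * ((q : ℤ) - 1) + ((D : ℤ) - 1) + (s : ℤ) := by
      push_cast [Nat.cast_sub hcn1, Nat.cast_sub (show 1 ≤ q by omega),
        Nat.cast_sub (show 1 ≤ D by omega)]
      ring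
    have e2 : ((m * (q - 1) : ℕ) : ℤ) = (m : ℤ) * ((q : ℤ) - 1) := by
      push_cast [Nat.cast_sub (show 1 ≤ q by omega)]
      ring
    have hiff : ((s : ℤ) ≤ ((m : ℤ) - (cn : ℤ)) * ((q : ℤ) - 1) + (q : ℤ) - (D : ℤ)) ↔
        (U + (D - 1) + s ≤ P) := by
      rw [hU, hP]
      constructor
      · intro h
        have h' : (((cn - 1) * (q - 1) + (D - 1) + s : ℕ) : ℤ) ≤ ((m * (q - 1) : ℕ) : ℤ) := by
          rw [e1, e2]
          linarith [h]
        exact_mod_cast h'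
      · intro h
        have h' := (Nat.cast_le (α := ℤ)).mpr h
        rw [e1, e2] at h'
        linarith [h']
    rw [hiff]
    constructor
    · -- code inclusion → arithmetic
      intro hcode
      by_contra hnot
      push_neg at hnot
      obtain ⟨e, hedef⟩ : ∃ e, e = P - s := ⟨_, rfl⟩
      have hesP : e ≤ P := by omega
      have hes : e ≤ m * (q - 1) := by rw [← hP]; exact hesP
      obtain ⟨g, hg1, hg2, hg3⟩ := witnessW q hq2 m e hes
      have hg2P : (∑ j, g j) + e = P := by rw [hP]; exact hg2
      have hgs : ∑ j, g j = s := by omega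
      have hcoe : ⇑(Finsupp.equivFunOnFinite.symm g) = g :=
        Finsupp.equivFunOnFinite.apply_symm_apply g
      have hieq : ∀ j, (Finsupp.equivFunOnFinite.symm g) j = g j := fun j => congrFun hcoe j
      have hiRM : (Finsupp.equivFunOnFinite.symm g) ∈ RMset q m (s : ℤ) := by
        refine ⟨fun j => by rw [hieq]; exact hg1 j, ?_⟩
        have hsc : (∑ j, ((Finsupp.equivFunOnFinite.symm g) j : ℤ)) = ((∑ j, g j : ℕ) : ℤ) := by
          push_cast
          exact Finset.sum_congr rfl fun j _ => by rw [hieq]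
        rw [hsc, hgs]
      have hiH := set_le_of_code_le F hq (fun i hi => hi.1) hcode _ hiRM
        (fun j => by rw [hieq]; exact hg1 j)
      obtain ⟨-, hprod⟩ := hiH
      have hprod' : d ≤ q ^ (e / (q - 1)) * (1 + e % (q - 1)) := by
        rw [← hg3]
        refine le_trans hprod (le_of_eq ?_)
        exact Finset.prod_congr rfl fun j _ => by rw [hieq]
      obtain ⟨k, hkdef⟩ : ∃ k, k = e / (q - 1) := ⟨_, rfl⟩
      obtain ⟨r, hrdef⟩ : ∃ r, r = e % (q - 1) := ⟨_, rfl⟩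
      rw [← hkdef, ← hrdef] at hprod'
      have hre : (q - 1) * k + r = e := by rw [hkdef, hrdef]; exact Nat.div_add_mod e (q - 1)
      have hrlt : r < q - 1 := by rw [hrdef]; exact Nat.mod_lt _ (by omega)
      have he_lt : e < cn * (q - 1) := by omega
      have hkcn : k ≤ cn - 1 := by
        have hdivlt : e / (q - 1) < cn := by
          rw [Nat.div_lt_iff_lt_mul (show 0 < q - 1 by omega)]
          exact he_lt
        omega
      rcases lt_or_eq_of_le hkcn with hk | hk
      · have h1 : q ^ k * (1 + r) ≤ q ^ (k + 1) := by
          rw [pow_succ]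
          exact Nat.mul_le_mul_left _ (by omega)
        have h2 : q ^ (k + 1) ≤ q ^ (cn - 1) := Nat.pow_le_pow_right (by omega) (by omega)
        rw [← hQdef] at h2
        omega
      · have hUk : (q - 1) * k = U := by rw [hk, hU, mul_comm]
        have hr' : r < D - 1 := by omega
        have h1 : q ^ k * (1 + r) ≤ Q * (D - 1) := by
          rw [hk, ← hQdef]
          exact Nat.mul_le_mul le_rfl (by omega)
        omega
    · -- arithmetic → code inclusion
      intro harith
      apply code_mono
      rintro i ⟨hi1, hi2⟩
      refine ⟨hi1, ?_⟩
      have hsum_i : ∑ j, i j ≤ s := by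
        have hcast : ((∑ j, i j : ℕ) : ℤ) = ∑ j, (i j : ℤ) := by push_cast; rfl
        have h6 := hcast ▸ hi2
        exact_mod_cast h6
      have hkey : ∑ j, ((q - i j) - 1) + ∑ j, i j = m * (q - 1) := by
        rw [← Finset.sum_add_distrib]
        rw [Finset.sum_congr rfl (fun j _ => show (q - i j - 1) + i j = q - 1 by
          have := hi1 j; omega)]
        simp [Finset.sum_const, Finset.card_univ, mul_comm]
      have hkeyP : ∑ j, ((q - i j) - 1) + ∑ j, i j = P := by rw [hP]; exact hkey
      have hsc : U + (D - 1) ≤ ∑ j, ((q - i j) - 1) := by omega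
      have hsc' : (cn - 1) * (q - 1) + (D - 1) ≤ ∑ j, ((q - i j) - 1) := by
        rw [← hU]; exact hsc
      have hG := prodG q hq2 m (fun j => q - i j)
        (fun j => by have h7 := hi1 j; omega)
        (fun j => by omega) (cn - 1) (D - 1) (by omega) (by simpa using hsc')
      have hQDeq : q ^ (cn - 1) * (1 + (D - 1)) = Q * D := by
        rw [hQdef]
        congr 1
        omega
      calc d ≤ Q * D := hQD2
        _ = q ^ (cn - 1) * (1 + (D - 1)) := hQDeq.symm
        _ ≤ ∏ j, (q - i j) := hG
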